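/- Let x ∈ (0,1) be a fixed real number. The function f(b) = log(1 + b/(1−x)) / log(1 + b/((1−x)·(b+1−x))) is strictly increasing on the interval (0, 2). -/

import Mathlib

open Real in
lemma f_aux (c : ℝ) (hc : 0 < c) :
    StrictMonoOn (fun b : ℝ =>
      (log (b + c) - log c) / (log ((1 + c) * b + c ^ 2) - log (c * (b + c))))
      (Set.Ioo (0 : ℝ) 2) := by
  have hbc : ∀ b : ℝ, 0 ≤ b → 0 < b + c := fun b hb => by linarith
  have hP : ∀ b : ℝ, 0 ≤ b → 0 < (1 + c) * b + c ^ 2 := fun b hb => by nlinarith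
  have hcb : ∀ b : ℝ, 0 ≤ b → 0 < c * (b + c) := fun b hb => by nlinarith
  have hN : ∀ b : ℝ, 0 ≤ b →
      HasDerivAt (fun b : ℝ => log (b + c) - log c) (1 / (b + c)) b := by
    intro b hb
    have h := (((hasDerivAt_id b).add_const c).log (hbc b hb).ne').sub_const (log c)
    simpa using h
  have hD : ∀ b : ℝ, 0 ≤ b →
      HasDerivAt (fun b : ℝ => log ((1 + c) * b + c ^ 2) - log (c * (b + c)))
        (c / ((b + c) * ((1 + c) * b + c ^ 2))) b := by
    intro b hb
    have h1 : HasDerivAt (fun b : ℝ => (1 + c) * b + c ^ 2) (1 + c) b := by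
      simpa using (((hasDerivAt_id b).const_mul (1 + c)).add_const (c ^ 2))
    have h2 : HasDerivAt (fun b : ℝ => c * (b + c)) c b := by
      simpa using (((hasDerivAt_id b).add_const c).const_mul c)
    have h := (h1.log (hP b hb).ne').sub (h2.log (hcb b hb).ne')
    refine h.congr_deriv ?_
    have h3 := (hbc b hb).ne'
    have h4 := (hP b hb).ne'
    have h5 := hc.ne'
    symm
    rw [div_sub_div _ _ h4 (mul_ne_zero h5 h3), div_eq_div_iff (mul_ne_zero h3 h4) (mul_ne_zero h4 (mul_ne_zero h5 h3))]
    ring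
  have hDpos : ∀ b : ℝ, 0 < b → 0 < log ((1 + c) * b + c ^ 2) - log (c * (b + c)) := by
    intro b hb
    have := Real.log_lt_log (hcb b hb.le)
      (by nlinarith : c * (b + c) < (1 + c) * b + c ^ 2)
    linarith
  set H : ℝ → ℝ := fun b =>
    ((1 + c) * b + c ^ 2) * (log ((1 + c) * b + c ^ 2) - log (c * (b + c)))
      - c * (log (b + c) - log c) with hHdef
  have hH : ∀ b : ℝ, 0 ≤ b →
      HasDerivAt H ((1 + c) * (log ((1 + c) * b + c ^ 2) - log (c * (b + c)))) b := by
    intro b hb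
    have h1 : HasDerivAt (fun b : ℝ => (1 + c) * b + c ^ 2) (1 + c) b := by
      simpa using (((hasDerivAt_id b).const_mul (1 + c)).add_const (c ^ 2))
    have h := (h1.mul (hD b hb)).sub ((hN b hb).const_mul c)
    refine h.congr_deriv ?_
    have h3 := (hbc b hb).ne'
    have h4 := (hP b hb).ne'
    have h5 := hc.ne'
    symm
    rw [mul_comm (b + c), ← mul_div_assoc, mul_div_mul_left c (b + c) h4, mul_one_div]
    ring
  have hHmono : StrictMonoOn H (Set.Ico 0 2) := by
    apply strictMonoOn_of_deriv_pos (convex_Ico 0 2)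
    · exact fun b hb => ((hH b hb.1).continuousAt).continuousWithinAt
    · rw [interior_Ico]
      intro b hb
      rw [(hH b hb.1.le).deriv]
      have := hDpos b hb.1
      nlinarith
  have hH0 : H 0 = 0 := by
    simp [hHdef, pow_two]
  have hHpos : ∀ b : ℝ, b ∈ Set.Ioo (0:ℝ) 2 → 0 < H b := by
    intro b hb
    have := hHmono (Set.mem_Ico.2 ⟨le_refl 0, by norm_num⟩)
      (Set.mem_Ico.2 ⟨hb.1.le, hb.2⟩) hb.1
    rwa [hH0] at this
  apply strictMonoOn_of_deriv_pos (convex_Ioo 0 2)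
  · intro b hb
    exact (((hN b hb.1.le).div (hD b hb.1.le)
      (hDpos b hb.1).ne')).continuousAt.continuousWithinAt
  · rw [interior_Ioo]
    intro b hb
    have hf : HasDerivAt (fun b : ℝ => (log (b + c) - log c) / (log ((1 + c) * b + c ^ 2) - log (c * (b + c)))) _ b := (hN b hb.1.le).div (hD b hb.1.le) (hDpos b hb.1).ne'
    rw [hf.deriv]
    apply div_pos
    · have key : 1 / (b + c) * (log ((1 + c) * b + c ^ 2) - log (c * (b + c)))
          - (log (b + c) - log c) * (c / ((b + c) * ((1 + c) * b + c ^ 2)))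
          = H b / ((b + c) * ((1 + c) * b + c ^ 2)) := by
        have h3 := (hbc b hb.1.le).ne'
        have h4 := (hP b hb.1.le).ne'
        simp only [hHdef]
        rw [eq_div_iff (mul_ne_zero h3 h4), sub_mul, mul_assoc (log (b + c) - log c), div_mul_cancel₀ _ (mul_ne_zero h3 h4), one_div, mul_comm _ (log ((1 + c) * b + c ^ 2) - log (c * (b + c))), mul_assoc (log ((1 + c) * b + c ^ 2) - log (c * (b + c))), ← mul_assoc (b + c)⁻¹, inv_mul_cancel₀ h3, one_mul]
        ring
      rw [key]
      exact div_pos (hHpos b hb) (mul_pos (hbc b hb.1.le) (hP b hb.1.le))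
    · exact pow_pos (hDpos b hb.1) 2

/-- for fixed `x ∈ (0,1)`, the function
`f(b) = log(1 + b/(1−x)) / log(1 + b/((1−x)·(b+1−x)))` is strictly increasing on `(0,2)`. -/
theorem f_strictMonoOn (x : ℝ) (hx : x ∈ Set.Ioo (0 : ℝ) 1) :
    StrictMonoOn
      (fun b : ℝ => Real.log (1 + b / (1 - x)) / Real.log (1 + b / ((1 - x) * (b + 1 - x))))
      (Set.Ioo (0 : ℝ) 2) := by
  obtain ⟨hx0, hx1⟩ := hx
  have hc : 0 < 1 - x := by linarith
  have h := f_aux (1 - x) hc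
  have heq : ∀ b : ℝ, b ∈ Set.Ioo (0:ℝ) 2 →
      Real.log (1 + b / (1 - x)) / Real.log (1 + b / ((1 - x) * (b + 1 - x)))
        = (Real.log (b + (1 - x)) - Real.log (1 - x)) /
          (Real.log ((1 + (1 - x)) * b + (1 - x) ^ 2) - Real.log ((1 - x) * (b + (1 - x)))) := by
    intro b hb
    have hb0 := hb.1
    have h1 : (0:ℝ) < b + (1 - x) := by linarith
    have h2 : (1:ℝ) + b / (1 - x) = (b + (1 - x)) / (1 - x) := by
      field_simp
      ring
    have h3 : (1:ℝ) + b / ((1 - x) * (b + 1 - x))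
        = ((1 + (1 - x)) * b + (1 - x) ^ 2) / ((1 - x) * (b + (1 - x))) := by
      have hb1 : b + 1 - x = b + (1 - x) := by ring
      rw [hb1]
      field_simp
      ring
    rw [h2, h3, Real.log_div h1.ne' hc.ne',
      Real.log_div (by nlinarith) (by positivity)]
  intro a ha b hb hab
  simp only
  rw [heq a ha, heq b hb]
  exact h ha hb hab
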